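/- Let C be an n×n symmetric Kalmanson matrix with n ≥ 3. Then the tour π = ⟨1, 2, …, n⟩ satisfies c(π) ≤ c(τ) for every tour τ on {1,…,n}; moreover the reversed tour π⁻ = ⟨1, n, n−1, …, 2⟩ has the same length as π and is therefore also an optimal TSP tour. -/

import Mathlib

/-- Length of a walk along a list of nodes (sum of consecutive edge costs). -/
def pathLen {α : Type*} (C : α → α → ℝ) : List α → ℝ
  | [] => 0
  | [_] => 0
  | a :: b :: t => C a b + pathLen C (b :: t)

/-- Length of the closed tour visiting the nodes of `l` in order and
returning from the last node to the first one. -/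
def tourLen {α : Type*} (C : α → α → ℝ) (l : List α) : ℝ :=
  pathLen C (l ++ l.take 1)

/-- `l` is a tour on the finite set `I`: an enumeration of the elements of `I`,
each appearing exactly once. -/
def IsTourOn {α : Type*} [DecidableEq α] (I : Finset α) (l : List α) : Prop :=
  l.Nodup ∧ l.toFinset = I

/-- Kalmanson conditions for a symmetric matrix indexed by `Fin n`. -/
def IsKalmanson {n : ℕ} (C : Fin n → Fin n → ℝ) : Prop :=
  ∀ i j k l : Fin n, i < j → j < k → k < l →
    C i j + C k l ≤ C i k + C j l ∧ C i l + C j k ≤ C i k + C j l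

section helpers
variable {α : Type*} (C : α → α → ℝ)

lemma pathLen_cons_cons (a b : α) (t : List α) :
    pathLen C (a :: b :: t) = C a b + pathLen C (b :: t) := rfl

lemma pathLen_concat : ∀ (l : List α) (hl : l ≠ []) (x : α),
    pathLen C (l ++ [x]) = pathLen C l + C (l.getLast hl) x
  | [a], _, x => by simp [pathLen]
  | a :: b :: t, _, x => by
    have ih := pathLen_concat (b :: t) (by simp) x
    have e : (a :: b :: t) ++ [x] = a :: b :: (t ++ [x]) := by simp
    rw [e, pathLen_cons_cons]
    have e2 : pathLen C (b :: (t ++ [x])) = pathLen C (b :: t) + C ((b :: t).getLast (by simp)) x := by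
      rw [← List.cons_append, ih]
    rw [e2, List.getLast_cons (by simp : (b :: t) ≠ []), pathLen_cons_cons]
    ring

lemma tourLen_eq (l : List α) (hl : l ≠ []) :
    tourLen C l = pathLen C l + C (l.getLast hl) (l.head hl) := by
  cases l with
  | nil => simp at hl
  | cons a t =>
    show pathLen C ((a :: t) ++ [a]) = _
    rw [pathLen_concat C (a :: t) (by simp) a]
    simp

lemma tourLen_rot (a : α) (t : List α) :
    tourLen C (a :: t) = tourLen C (t ++ [a]) := by
  cases t with
  | nil => simp [tourLen]
  | cons b s =>
    rw [tourLen_eq C (a :: b :: s) (by simp), tourLen_eq C ((b :: s) ++ [a]) (by simp),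
      pathLen_concat C (b :: s) (by simp) a, pathLen_cons_cons,
      List.getLast_cons (by simp : (b :: s) ≠ []), List.getLast_append_singleton]
    have : ((b :: s) ++ [a]).head (by simp) = b := by simp
    rw [this]
    simp only [List.head_cons]
    ring

lemma tourLen_append_comm : ∀ (l1 l2 : List α), tourLen C (l1 ++ l2) = tourLen C (l2 ++ l1)
  | [], l2 => by simp
  | a :: l1, l2 => by
    rw [show (a :: l1) ++ l2 = a :: (l1 ++ l2) by simp, tourLen_rot,
      show (l1 ++ l2) ++ [a] = l1 ++ (l2 ++ [a]) by simp,
      tourLen_append_comm l1 (l2 ++ [a])]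
    simp

lemma tourLen_concat_end (b : α) (s : List α) (a m : α) :
    tourLen C (((b :: s) ++ [a]) ++ [m]) =
      tourLen C ((b :: s) ++ [a]) - C a b + C a m + C m b := by
  rw [tourLen_eq C (((b :: s) ++ [a]) ++ [m]) (by simp),
    tourLen_eq C ((b :: s) ++ [a]) (by simp),
    pathLen_concat C ((b :: s) ++ [a]) (by simp) m,
    List.getLast_append_singleton, List.getLast_append_singleton]
  have h1 : (((b :: s) ++ [a]) ++ [m]).head (by simp) = b := by simp
  have h2 : ((b :: s) ++ [a]).head (by simp) = b := by simp
  rw [h1, h2]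
  ring

lemma pathLen_reverse (hsym : ∀ i j, C i j = C j i) :
    ∀ l : List α, pathLen C l.reverse = pathLen C l
  | [] => rfl
  | [a] => rfl
  | a :: b :: t => by
    have ih := pathLen_reverse hsym (b :: t)
    rw [show (a :: b :: t).reverse = (b :: t).reverse ++ [a] by simp,
      pathLen_concat C ((b :: t).reverse) (by simp) a, ih,
      List.getLast_reverse, pathLen_cons_cons]
    simp only [List.head_cons]
    rw [hsym b a]
    ring

lemma tourLen_reverse (hsym : ∀ i j, C i j = C j i) (l : List α) :
    tourLen C l.reverse = tourLen C l := by
  cases l with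
  | nil => rfl
  | cons a t =>
    rw [tourLen_eq C ((a :: t).reverse) (by simp), tourLen_eq C (a :: t) (by simp),
      pathLen_reverse C hsym, List.getLast_reverse, List.head_reverse]
    rw [hsym]

lemma pathLen_map {β : Type*} (f : β → α) :
    ∀ l : List β, pathLen C (l.map f) = pathLen (fun a b => C (f a) (f b)) l
  | [] => rfl
  | [a] => rfl
  | a :: b :: t => by
    rw [List.map_cons, List.map_cons, pathLen_cons_cons, pathLen_cons_cons,
      ← List.map_cons, pathLen_map f (b :: t)]

lemma tourLen_map {β : Type*} (f : β → α) (l : List β) :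
    tourLen C (l.map f) = tourLen (fun a b => C (f a) (f b)) l := by
  unfold tourLen
  rw [← List.map_take, ← List.map_append, pathLen_map]

end helpers

lemma kalmanson_key (C : ℕ → ℕ → ℝ) {m : ℕ}
    (hkal : ∀ i j k l, i < j → j < k → k < l → l ≤ m →
      C i j + C k l ≤ C i k + C j l ∧ C i l + C j k ≤ C i k + C j l)
    {p q : ℕ} (hpq : p < q) (hqm : q < m) :
    C 0 m + C (m-1) m - C 0 (m-1) ≤ C p m + C q m - C p q := by
  have hm2 : 2 ≤ m := by omega
  rcases Nat.eq_zero_or_pos p with hp0 | hp0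
  · subst hp0
    rcases eq_or_lt_of_le (by omega : q ≤ m - 1) with hq | hq
    · rw [hq]
    · have h1 := (hkal 0 q (m-1) m hpq (by omega) (by omega) le_rfl).1
      linarith
  · rcases eq_or_lt_of_le (by omega : q ≤ m - 1) with hq | hq
    · subst hq
      have h2 := (hkal 0 p (m-1) m hp0 hpq (by omega) le_rfl).2
      linarith
    · have h1 := (hkal 0 q (m-1) m (by omega) (by omega) (by omega) le_rfl).1
      have h2 := (hkal 0 p q m hp0 hpq (by omega) le_rfl).2
      linarith

lemma kalmanson_main (C : ℕ → ℕ → ℝ) (hsym : ∀ i j, C i j = C j i) :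
    ∀ n : ℕ, (∀ i j k l, i < j → j < k → k < l → l < n →
      C i j + C k l ≤ C i k + C j l ∧ C i l + C j k ≤ C i k + C j l) →
    ∀ l : List ℕ, l.Nodup → l.toFinset = Finset.range n →
      tourLen C (List.range n) ≤ tourLen C l := by
  intro n
  induction n with
  | zero =>
    intro _ l _ hset
    have : l = [] := by simpa [List.toFinset_eq_empty_iff] using hset
    simp [this]
  | succ m ih =>
    intro hkal l hnd hset
    rcases Nat.lt_or_ge m 2 with hm | hm
    · interval_cases m
      · -- n = 1
        have hlen : l.length = 1 := by
          rw [← List.toFinset_card_of_nodup hnd, hset]; simp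
        obtain ⟨a, rfl⟩ := List.length_eq_one_iff.mp hlen
        have h0 : a = 0 := by
          have h' : (0:ℕ) ∈ [a] := by rw [← List.mem_toFinset, hset]; simp
          simp at h'; omega
        subst h0
        rw [show List.range (0+1) = [0] from rfl]
      · -- n = 2
        have hlen : l.length = 2 := by
          rw [← List.toFinset_card_of_nodup hnd, hset]; simp
        obtain ⟨a, b, rfl⟩ := List.length_eq_two.mp hlen
        have h0 : (0:ℕ) ∈ [a,b] := by rw [← List.mem_toFinset, hset]; simp
        have h1 : (1:ℕ) ∈ [a,b] := by rw [← List.mem_toFinset, hset]; simp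
        have hne : a ≠ b := by simp at hnd; exact hnd
        simp only [List.mem_cons, List.mem_singleton, List.not_mem_nil, or_false] at h0 h1
        have hcase : (a = 0 ∧ b = 1) ∨ (a = 1 ∧ b = 0) := by omega
        have hr : List.range 2 = [0, 1] := by decide
        rcases hcase with ⟨rfl, rfl⟩ | ⟨rfl, rfl⟩ <;>
          simp [hr, tourLen, pathLen] <;> linarith [hsym 0 1, hsym 1 0]
    · -- main step: n = m + 1, m ≥ 2
      have hml : m ∈ l := by rw [← List.mem_toFinset, hset]; simp
      obtain ⟨l1, l2, rfl⟩ := List.append_of_mem hml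
      set t : List ℕ := l2 ++ l1 with ht
      have hperm : (l1 ++ m :: l2).Perm (m :: t) :=
        List.perm_middle.trans ((List.perm_append_comm).cons m)
      have hndt : (m :: t).Nodup := hperm.nodup hnd
      have hmt : m ∉ t := (List.nodup_cons.mp hndt).1
      have hndt' : t.Nodup := (List.nodup_cons.mp hndt).2
      have hsett : t.toFinset = Finset.range m := by
        have h1 : (m :: t).toFinset = Finset.range (m+1) := by
          rw [← List.toFinset_eq_of_perm _ _ hperm, hset]
        rw [List.toFinset_cons, Finset.range_add_one] at h1
        ext x
        constructor
        · intro hx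
          have hxm : x ≠ m := fun h => hmt (h ▸ List.mem_toFinset.mp hx)
          have hx2 : x ∈ insert m (Finset.range m) := h1 ▸ Finset.mem_insert_of_mem hx
          rcases Finset.mem_insert.mp hx2 with h | h
          · exact absurd h hxm
          · exact h
        · intro hx
          have hxm : x ≠ m := by have := Finset.mem_range.mp hx; omega
          have hx2 : x ∈ insert m t.toFinset := h1.symm ▸ Finset.mem_insert_of_mem hx
          rcases Finset.mem_insert.mp hx2 with h | h
          · exact absurd h hxm
          · exact h
      have hlent : 2 ≤ t.length := by
        rw [← List.toFinset_card_of_nodup hndt', hsett, Finset.card_range]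
        exact hm
      have htne : t ≠ [] := by
        intro h0; rw [h0] at hlent; simp at hlent
      obtain ⟨h, s0, hts⟩ := List.exists_cons_of_ne_nil htne
      have hs0ne : s0 ≠ [] := by
        intro h0; rw [hts, h0] at hlent; simp at hlent
      obtain ⟨s, a, hs0⟩ := (List.eq_nil_or_concat s0).resolve_left hs0ne
      rw [List.concat_eq_append] at hs0
      have hts2 : t = (h :: s) ++ [a] := by rw [hts, hs0]; simp
      have hat : a ∈ t := by rw [hts2]; simp
      have hht : h ∈ t := by rw [hts]; simp
      have ham : a < m := by
        have := List.mem_toFinset.mpr hat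
        rw [hsett] at this; exact Finset.mem_range.mp this
      have hhm : h < m := by
        have := List.mem_toFinset.mpr hht
        rw [hsett] at this; exact Finset.mem_range.mp this
      have hne : a ≠ h := by
        have hcopy : ((h :: s) ++ [a]).Nodup := hts2 ▸ hndt'
        have h2 : (h ∉ s ∧ ¬h = a) ∧ (s ++ [a]).Nodup := by simpa using hcopy
        exact fun he => h2.1.2 he.symm
      -- decompose tourLen l
      have hdl : tourLen C (l1 ++ m :: l2) =
          tourLen C t - C a h + C a m + C m h := by
        have e1 : tourLen C (l1 ++ m :: l2) = tourLen C (m :: t) := by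
          rw [tourLen_append_comm]
          rfl
        rw [e1, tourLen_rot, hts2]
        exact tourLen_concat_end C h s a m
      -- decompose tourLen (range (m+1))
      set k := m - 2 with hk
      have er2 : List.range m = (0 :: (List.range k).map Nat.succ) ++ [m-1] := by
        conv_lhs => rw [show m = (k+1)+1 by omega]
        rw [List.range_succ, List.range_succ_eq_map, show k+1 = m-1 by omega]
      have er : List.range (m+1) = ((0 :: (List.range k).map Nat.succ) ++ [m-1]) ++ [m] := by
        rw [List.range_succ, er2]
      have hdr : tourLen C (List.range (m+1)) =
          tourLen C (List.range m) - C (m-1) 0 + C (m-1) m + C m 0 := by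
        rw [er, tourLen_concat_end C 0 ((List.range k).map Nat.succ) (m-1) m, ← er2]
      -- key inequality
      set p := min a h with hp
      set q := max a h with hq
      have hpq : p < q := by omega
      have hqm : q < m := by omega
      have hkey := kalmanson_key C
        (fun i j kk l h1 h2 h3 h4 => hkal i j kk l h1 h2 h3 (by omega)) hpq hqm
      have heq1 : C a m + C m h - C a h = C p m + C q m - C p q := by
        rcases le_or_gt a h with h' | h'
        · rw [show p = a by omega, show q = h by omega, hsym m h]
        · rw [show p = h by omega, show q = a by omega, hsym m h, hsym a h]
          ring
      have hih := ih (fun i j kk l h1 h2 h3 h4 => hkal i j kk l h1 h2 h3 (by omega))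
        t hndt' hsett
      rw [hdl, hdr, hsym (m-1) 0, hsym m 0]
      linarith [hkey, heq1.le, heq1.ge, hih]


theorem identity_tour_and_its_reverse_optimal_for_kalmanson
    {n : ℕ} (hn : 3 ≤ n) (C : Fin n → Fin n → ℝ)
    (hsym : ∀ i j, C i j = C j i) (hkal : IsKalmanson C) :
    (∀ l : List (Fin n), IsTourOn Finset.univ l →
        tourLen C (List.finRange n) ≤ tourLen C l) ∧
    tourLen C ((List.finRange n).take 1 ++ ((List.finRange n).drop 1).reverse) =
      tourLen C (List.finRange n) ∧
    (∀ l : List (Fin n), IsTourOn Finset.univ l →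
        tourLen C ((List.finRange n).take 1 ++ ((List.finRange n).drop 1).reverse) ≤
          tourLen C l) := by
  classical
  set CN : ℕ → ℕ → ℝ :=
    fun i j => if h : i < n ∧ j < n then C ⟨i, h.1⟩ ⟨j, h.2⟩ else 0 with hCN
  have hCNfin : ∀ a b : Fin n, CN a.val b.val = C a b := by
    intro a b
    simp only [hCN]
    rw [dif_pos ⟨a.isLt, b.isLt⟩]
  have hCNe : ∀ (x : ℕ) (hx : x < n) (y : ℕ) (hy : y < n),
      CN x y = C ⟨x, hx⟩ ⟨y, hy⟩ := by
    intro x hx y hy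
    simp only [hCN]
    rw [dif_pos ⟨hx, hy⟩]
  have hsymN : ∀ i j, CN i j = CN j i := by
    intro i j
    simp only [hCN]
    split_ifs with h1 h2 h2
    · exact hsym _ _
    · exact absurd ⟨h1.2, h1.1⟩ h2
    · exact absurd ⟨h2.2, h2.1⟩ h1
    · rfl
  have hkalN : ∀ i j k l, i < j → j < k → k < l → l < n →
      CN i j + CN k l ≤ CN i k + CN j l ∧ CN i l + CN j k ≤ CN i k + CN j l := by
    intro i j k l h1 h2 h3 h4
    have hi : i < n := by omega
    have hj : j < n := by omega
    have hk : k < n := by omega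
    rw [hCNe i hi j hj, hCNe k hk l h4, hCNe i hi k hk, hCNe j hj l h4,
      hCNe i hi l h4, hCNe j hj k hk]
    exact hkal ⟨i, hi⟩ ⟨j, hj⟩ ⟨k, hk⟩ ⟨l, h4⟩ h1 h2 h3
  -- transfer of tour lengths
  have hmap : ∀ l : List (Fin n), tourLen CN (l.map Fin.val) = tourLen C l := by
    intro l
    rw [tourLen_map]
    congr 1
    funext a b
    exact hCNfin a b
  have hrange : tourLen CN (List.range n) = tourLen C (List.finRange n) := by
    rw [← List.map_coe_finRange_eq_range, hmap]
  have himg : (Finset.univ : Finset (Fin n)).image Fin.val = Finset.range n := by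
    ext x
    simp only [Finset.mem_image, Finset.mem_univ, true_and, Finset.mem_range]
    constructor
    · rintro ⟨a, rfl⟩; exact a.isLt
    · intro hx; exact ⟨⟨x, hx⟩, rfl⟩
  have main : ∀ l : List (Fin n), IsTourOn Finset.univ l →
      tourLen C (List.finRange n) ≤ tourLen C l := by
    rintro l ⟨hnd, hset⟩
    have hndN : (l.map Fin.val).Nodup := hnd.map Fin.val_injective
    have hsetN : (l.map Fin.val).toFinset = Finset.range n := by
      rw [show (l.map Fin.val).toFinset = l.toFinset.image Fin.val by ext x; simp,
        hset, himg]
    have := kalmanson_main CN hsymN n hkalN (l.map Fin.val) hndN hsetN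
    rwa [hrange, hmap] at this
  have hfne : List.finRange n ≠ [] := by
    intro h0
    have h1 := congrArg List.length h0
    rw [List.length_finRange] at h1
    simp at h1
    omega
  obtain ⟨a, t, hft⟩ := List.exists_cons_of_ne_nil hfne
  have hrev : tourLen C ((List.finRange n).take 1 ++ ((List.finRange n).drop 1).reverse) =
      tourLen C (List.finRange n) := by
    rw [hft]
    show tourLen C (a :: t.reverse) = tourLen C (a :: t)
    rw [tourLen_rot, show t.reverse ++ [a] = (a :: t).reverse by simp,
      tourLen_reverse C hsym, tourLen_rot]
  exact ⟨main, hrev, fun l hl => hrev ▸ main l hl⟩
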